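/- Let X be an n×n real symmetric PSD matrix with rank(X) = r, and let K be a positive integer with r(r+1)/2 > K+2. Given K+2 real symmetric n×n matrices P, R₁, …, R_K, E, there exists a nonzero real symmetric n×n matrix V whose column space is contained in the column space of X such that Tr(PV) = 0, Tr(RₖV) = 0 for all k = 1, …, K, and Tr(EV) = 0. -/

import Mathlib

open Matrix

namespace RankReductionAux

variable {n r : ℕ}

/-- Symmetric matrix built from a function on unordered pairs. -/
def symMat (c : Sym2 (Fin r) → ℝ) : Matrix (Fin r) (Fin r) ℝ :=
  Matrix.of fun i j => c s(i, j)

lemma symMat_isSymm (c : Sym2 (Fin r) → ℝ) : (symMat c).IsSymm := by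
  ext i j
  simp only [symMat, Matrix.transpose_apply, Matrix.of_apply]
  rw [Sym2.eq_swap]

lemma symMat_add (c d : Sym2 (Fin r) → ℝ) : symMat (c + d) = symMat c + symMat d := by
  ext i j; simp [symMat]

lemma symMat_smul (a : ℝ) (c : Sym2 (Fin r) → ℝ) : symMat (a • c) = a • symMat c := by
  ext i j; simp [symMat]

lemma symMat_eq_zero {c : Sym2 (Fin r) → ℝ} (h : symMat c = 0) : c = 0 := by
  funext s
  induction s using Sym2.ind with
  | _ i j =>
    have := congrArg (fun M : Matrix (Fin r) (Fin r) ℝ => M i j) h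
    simpa [symMat] using this

lemma mulVec_eq_sum_cols (W : Matrix (Fin n) (Fin r) ℝ) (v : Fin r → ℝ) :
    W.mulVec v = ∑ j, v j • (fun i => W i j) := by
  funext i
  simp [Matrix.mulVec, dotProduct, Finset.sum_apply, mul_comm]

/-- If the columns of `W` are linearly independent then left multiplication by `W`
is injective on matrices. -/
lemma eq_zero_of_mul_eq_zero {m : ℕ} (W : Matrix (Fin n) (Fin r) ℝ)
    (hW : LinearIndependent ℝ (fun j => (fun i => W i j)))
    (M : Matrix (Fin r) (Fin m) ℝ) (h : W * M = 0) : M = 0 := by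
  ext k j
  have hcol : W.mulVec (fun i => M i j) = 0 := by
    funext i
    have := congrArg (fun A : Matrix (Fin n) (Fin m) ℝ => A i j) h
    simpa [Matrix.mul_apply, Matrix.mulVec, dotProduct] using this
  rw [mulVec_eq_sum_cols] at hcol
  have := (Fintype.linearIndependent_iff.mp hW) (fun i => M i j) hcol
  simpa using this k

end RankReductionAux

open RankReductionAux

/-- Dimension-counting step of rank reduction: if `rank(X)(rank(X)+1)/2 > K+2`,
then there is a nonzero symmetric matrix `V`, with column space contained in
that of `X`, orthogonal (in trace inner product) to the `K+2` given symmetric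
matrices `P`, `R₁, …, R_K`, `E`. -/
theorem exists_null_direction {n K r : ℕ} (hK : 0 < K)
    (X : Matrix (Fin n) (Fin n) ℝ) (hX : X.PosSemidef) (hr : X.rank = r)
    (hrK : K + 2 < r * (r + 1) / 2)
    (P E : Matrix (Fin n) (Fin n) ℝ) (R : Fin K → Matrix (Fin n) (Fin n) ℝ)
    (hP : P.IsSymm) (hE : E.IsSymm) (hR : ∀ k, (R k).IsSymm) :
    ∃ V : Matrix (Fin n) (Fin n) ℝ, V ≠ 0 ∧ V.IsSymm ∧
      LinearMap.range (Matrix.toLin' V) ≤ LinearMap.range (Matrix.toLin' X) ∧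
      (P * V).trace = 0 ∧ (∀ k, (R k * V).trace = 0) ∧ (E * V).trace = 0 := by
  classical
  -- a basis of the column space of `X`
  have hrank : Module.finrank ℝ ↥(LinearMap.range X.mulVecLin) = r := hr
  let b : Module.Basis (Fin r) ℝ ↥(LinearMap.range X.mulVecLin) :=
    Module.finBasisOfFinrankEq ℝ _ hrank
  -- the matrix of basis column vectors
  set W : Matrix (Fin n) (Fin r) ℝ := Matrix.of fun i j => (b j : Fin n → ℝ) i with hWdef
  have hWcol : ∀ j, (fun i => W i j) = ((b j : Fin n → ℝ)) := fun j => rfl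
  have hli : LinearIndependent ℝ (fun j => (fun i => W i j)) := by
    have h2 := b.linearIndependent.map' (Submodule.subtype _)
      (Submodule.ker_subtype _)
    exact h2
  -- the parametrized family of candidate matrices
  let Φ : (Sym2 (Fin r) → ℝ) → Matrix (Fin n) (Fin n) ℝ :=
    fun c => W * symMat c * Wᵀ
  have hΦadd : ∀ c d, Φ (c + d) = Φ c + Φ d := by
    intro c d
    simp [Φ, symMat_add, Matrix.mul_add, Matrix.add_mul]
  have hΦsmul : ∀ (a : ℝ) c, Φ (a • c) = a • Φ c := by
    intro a c
    simp [Φ, symMat_smul, Matrix.mul_smul, Matrix.smul_mul]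
  have hΦsymm : ∀ c, (Φ c).IsSymm := by
    intro c
    unfold Matrix.IsSymm
    simp only [Φ, Matrix.transpose_mul, Matrix.transpose_transpose, Matrix.mul_assoc]
    rw [(symMat_isSymm c)]
  have hΦinj : ∀ c, Φ c = 0 → c = 0 := by
    intro c hc
    have h1 : W * (symMat c * Wᵀ) = 0 := by rw [← Matrix.mul_assoc]; exact hc
    have h2 : symMat c * Wᵀ = 0 := eq_zero_of_mul_eq_zero W hli _ h1
    have h3 : W * (symMat c)ᵀ = 0 := by
      have := congrArg Matrix.transpose h2
      simpa [Matrix.transpose_mul] using this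
    have h4 : (symMat c)ᵀ = 0 := eq_zero_of_mul_eq_zero W hli _ h3
    have h5 : symMat c = 0 := by
      have := congrArg Matrix.transpose h4
      simpa using this
    exact symMat_eq_zero h5
  -- the linear map collecting the K+2 trace constraints
  let T : (Sym2 (Fin r) → ℝ) →ₗ[ℝ] ℝ × (Fin K → ℝ) × ℝ :=
    { toFun := fun c => ((P * Φ c).trace, fun k => ((R k) * Φ c).trace, (E * Φ c).trace)
      map_add' := by
        intro c d
        simp [hΦadd, Matrix.mul_add, Matrix.trace_add, Prod.ext_iff]
        funext k
        simp [hΦadd, Matrix.mul_add, Matrix.trace_add]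
      map_smul' := by
        intro a c
        simp [hΦsmul, Matrix.mul_smul, Matrix.trace_smul, Prod.ext_iff, Prod.smul_def]
        funext k
        simp [hΦsmul, Matrix.mul_smul, Matrix.trace_smul] }
  -- dimension count: T cannot be injective
  have hdim : ¬ Function.Injective T := by
    intro hinj
    have hle := LinearMap.finrank_le_finrank_of_injective hinj
    have hdom : Module.finrank ℝ (Sym2 (Fin r) → ℝ) = r * (r + 1) / 2 := by
      rw [Module.finrank_pi]
      rw [Sym2.card]
      simp [Nat.choose_two_right, Fintype.card_fin, Nat.mul_comm]
    have hcod : Module.finrank ℝ (ℝ × (Fin K → ℝ) × ℝ) = K + 2 := by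
      simp [Module.finrank_prod, Module.finrank_pi]
      ring
    rw [hdom, hcod] at hle
    omega
  -- extract a nonzero element of the kernel of T
  have : ∃ c : Sym2 (Fin r) → ℝ, c ≠ 0 ∧ T c = 0 := by
    rw [Function.not_injective_iff] at hdim
    obtain ⟨c₁, c₂, heq, hne⟩ := hdim
    refine ⟨c₁ - c₂, sub_ne_zero.mpr hne, ?_⟩
    rw [map_sub, heq, sub_self]
  obtain ⟨c, hc0, hTc⟩ := this
  refine ⟨Φ c, ?_, hΦsymm c, ?_, ?_, ?_, ?_⟩
  · intro h
    exact hc0 (hΦinj c h)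
  · -- column space containment
    rintro y ⟨x, rfl⟩
    have hy : Matrix.toLin' (Φ c) x = W.mulVec ((symMat c * Wᵀ).mulVec x) := by
      rw [Matrix.toLin'_apply]
      simp [Φ, Matrix.mul_assoc, Matrix.mulVec_mulVec]
    rw [hy, mulVec_eq_sum_cols]
    have hmem : ∀ j, (fun i => W i j) ∈ LinearMap.range X.mulVecLin := by
      intro j
      rw [hWcol j]
      exact (b j).2
    have hsum : (∑ j, ((symMat c * Wᵀ).mulVec x) j • (fun i => W i j)) ∈
        LinearMap.range X.mulVecLin := by
      apply Submodule.sum_mem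
      intro j _
      exact Submodule.smul_mem _ _ (hmem j)
    obtain ⟨z, hz⟩ := hsum
    exact ⟨z, by rw [Matrix.toLin'_apply, ← Matrix.mulVecLin_apply, hz]⟩
  · exact congrArg Prod.fst hTc
  · intro k
    exact congrFun (congrArg Prod.fst (congrArg Prod.snd hTc)) k
  · exact congrArg Prod.snd (congrArg Prod.snd hTc)
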